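/- For c = (c₁,c₂,c₃) in the cone C with μ(c) = min(c₁+c₂−c₃,c₃−c₁,c₃−c₂) ≥ m ≥ 1, the subgroup P_c of lower-triangular-type matrices is normal-compatible in the sense: N_c is a normal subgroup of N_{c−mρ}, where for d = (d₁,d₂,d₃), N_d is the group of 3×3 lower unitriangular matrices over O with (2,1)-entry in 𝔪^{d₁}, (3,2)-entry in 𝔪^{d₂}, and (3,1)-entry in 𝔪^{d₃}. -/

import Mathlib

open Matrix

/-- For `d = (d₁,d₂,d₃)`, the set `N_d` of lower unitriangular matrices in `GL₃(O)`
with `(2,1)`-entry in `𝔪^{d₁}`, `(3,2)`-entry in `𝔪^{d₂}` and `(3,1)`-entry in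
`𝔪^{d₃}` (indices 1-based; `𝔪 = (π)`). -/
def nSet {O : Type*} [CommRing O] (π : O) (d₁ d₂ d₃ : ℕ) :
    Set (GL (Fin 3) O) :=
  {g | g.val 0 0 = 1 ∧ g.val 1 1 = 1 ∧ g.val 2 2 = 1 ∧
    g.val 0 1 = 0 ∧ g.val 0 2 = 0 ∧ g.val 1 2 = 0 ∧
    g.val 1 0 ∈ (Ideal.span {π} : Ideal O) ^ d₁ ∧
    g.val 2 1 ∈ (Ideal.span {π} : Ideal O) ^ d₂ ∧
    g.val 2 0 ∈ (Ideal.span {π} : Ideal O) ^ d₃}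

section Helpers
variable {O : Type*} [CommRing O]

lemma inv_val_eq (g : GL (Fin 3) O)
    (h00 : g.val 0 0 = 1) (h11 : g.val 1 1 = 1) (h22 : g.val 2 2 = 1)
    (h01 : g.val 0 1 = 0) (h02 : g.val 0 2 = 0) (h12 : g.val 1 2 = 0) :
    (g⁻¹).val = !![(1:O),0,0; -(g.val 1 0),1,0;
      g.val 1 0 * g.val 2 1 - g.val 2 0, -(g.val 2 1), 1] := by
  set M : Matrix (Fin 3) (Fin 3) O :=
    !![(1:O),0,0; -(g.val 1 0),1,0;
      g.val 1 0 * g.val 2 1 - g.val 2 0, -(g.val 2 1), 1] with hMdef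
  have hM : g.val * M = 1 := by
    ext i j
    fin_cases i <;> fin_cases j <;>
      simp [hMdef, Matrix.mul_apply, Fin.sum_univ_three, h00, h11, h22, h01, h02, h12,
        Matrix.one_apply] <;> ring
  calc (g⁻¹).val = (g⁻¹).val * (g.val * M) := by rw [hM, mul_one]
    _ = ((g⁻¹).val * g.val) * M := by rw [mul_assoc]
    _ = M := by rw [← Units.val_mul, inv_mul_cancel, Units.val_one, one_mul]

variable (π : O)

lemma nSet_one (d₁ d₂ d₃ : ℕ) : (1 : GL (Fin 3) O) ∈ nSet π d₁ d₂ d₃ := by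
  refine ⟨?_, ?_, ?_, ?_, ?_, ?_, ?_, ?_, ?_⟩ <;>
    simp [Units.val_one, Matrix.one_apply]

lemma nSet_mul {d₁ d₂ d₃ : ℕ} (hd : d₃ ≤ d₁ + d₂)
    {a b : GL (Fin 3) O} (ha : a ∈ nSet π d₁ d₂ d₃) (hb : b ∈ nSet π d₁ d₂ d₃) :
    a * b ∈ nSet π d₁ d₂ d₃ := by
  obtain ⟨a00, a11, a22, a01, a02, a12, ha1, ha2, ha3⟩ := ha
  obtain ⟨b00, b11, b22, b01, b02, b12, hb1, hb2, hb3⟩ := hb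
  have key : ∀ i j, (a * b).val i j = ∑ k, a.val i k * b.val k j := by
    intro i j; rw [Units.val_mul, Matrix.mul_apply]
  refine ⟨?_, ?_, ?_, ?_, ?_, ?_, ?_, ?_, ?_⟩ <;>
    rw [key] <;>
    simp only [Fin.sum_univ_three, a00, a11, a22, a01, a02, a12, b00, b11, b22, b01, b02, b12,
      one_mul, mul_one, mul_zero, zero_mul, add_zero, zero_add]
  · exact add_mem ha1 hb1
  · exact add_mem ha2 hb2
  · refine add_mem (add_mem ha3 ?_) hb3
    have : (Ideal.span {π} : Ideal O) ^ (d₂ + d₁) ≤ (Ideal.span {π}) ^ d₃ :=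
      Ideal.pow_le_pow_right (by omega)
    exact this (by rw [pow_add]; exact Ideal.mul_mem_mul ha2 hb1)

lemma nSet_inv {d₁ d₂ d₃ : ℕ} (hd : d₃ ≤ d₁ + d₂)
    {a : GL (Fin 3) O} (ha : a ∈ nSet π d₁ d₂ d₃) :
    a⁻¹ ∈ nSet π d₁ d₂ d₃ := by
  obtain ⟨a00, a11, a22, a01, a02, a12, ha1, ha2, ha3⟩ := ha
  have hv := inv_val_eq a a00 a11 a22 a01 a02 a12
  refine ⟨?_, ?_, ?_, ?_, ?_, ?_, ?_, ?_, ?_⟩ <;> rw [hv] <;> simp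
  · exact ha1
  · exact ha2
  · refine sub_mem ?_ ha3
    have : (Ideal.span {π} : Ideal O) ^ (d₁ + d₂) ≤ (Ideal.span {π}) ^ d₃ :=
      Ideal.pow_le_pow_right (by omega)
    exact this (by rw [pow_add]; exact Ideal.mul_mem_mul ha1 ha2)

lemma nSet_subset {d₁ d₂ d₃ e₁ e₂ e₃ : ℕ} (h1 : e₁ ≤ d₁) (h2 : e₂ ≤ d₂) (h3 : e₃ ≤ d₃) :
    nSet π d₁ d₂ d₃ ⊆ nSet π e₁ e₂ e₃ := by
  rintro g ⟨g00, g11, g22, g01, g02, g12, hg1, hg2, hg3⟩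
  exact ⟨g00, g11, g22, g01, g02, g12,
    Ideal.pow_le_pow_right h1 hg1, Ideal.pow_le_pow_right h2 hg2, Ideal.pow_le_pow_right h3 hg3⟩

lemma nSet_conj {c₁ c₂ c₃ e₁ e₂ e₃ : ℕ} (hA : c₃ ≤ e₂ + c₁) (hB : c₃ ≤ e₁ + c₂)
    {g n : GL (Fin 3) O} (hg : g ∈ nSet π e₁ e₂ e₃) (hn : n ∈ nSet π c₁ c₂ c₃) :
    g * n * g⁻¹ ∈ nSet π c₁ c₂ c₃ := by
  obtain ⟨g00, g11, g22, g01, g02, g12, hg1, hg2, hg3⟩ := hg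
  obtain ⟨n00, n11, n22, n01, n02, n12, hn1, hn2, hn3⟩ := hn
  have hv := inv_val_eq g g00 g11 g22 g01 g02 g12
  have key : ∀ i j, (g * n * g⁻¹).val i j
      = ∑ k, (∑ l, g.val i l * n.val l k) * (g⁻¹).val k j := by
    intro i j
    rw [Units.val_mul, Units.val_mul, Matrix.mul_apply]
    simp [Matrix.mul_apply]
  refine ⟨?_, ?_, ?_, ?_, ?_, ?_, ?_, ?_, ?_⟩ <;>
    rw [key, hv] <;>
    simp [Fin.sum_univ_three, g00, g11, g22, g01, g02, g12, n00, n11, n22, n01, n02, n12]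
  · exact hn1
  · exact hn2
  · have heq : g.val 2 0 + g.val 2 1 * n.val 1 0 + n.val 2 0
        + -((g.val 2 1 + n.val 2 1) * g.val 1 0) + (g.val 1 0 * g.val 2 1 - g.val 2 0)
        = n.val 2 0 + (g.val 2 1 * n.val 1 0 - g.val 1 0 * n.val 2 1) := by ring
    rw [heq]
    refine add_mem hn3 (sub_mem ?_ ?_)
    · exact Ideal.pow_le_pow_right hA (by rw [pow_add]; exact Ideal.mul_mem_mul hg2 hn1)
    · exact Ideal.pow_le_pow_right hB (by rw [pow_add]; exact Ideal.mul_mem_mul hg1 hn2)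
end Helpers

/-- For `c` in the cone with `μ(c) ≥ m ≥ 1`, both `N_c` and `N_{c−mρ}` are subgroups of
`GL₃(O)`, `N_c ⊆ N_{c−mρ}`, and `N_c` is a normal subgroup of `N_{c−mρ}`. -/
theorem stmt_11 (O : Type*) [CommRing O] [IsDomain O] [IsDiscreteValuationRing O]
    (π : O) (hπ : Irreducible π) (c₁ c₂ c₃ m : ℕ)
    (h1 : c₁ ≤ c₃) (h2 : c₂ ≤ c₃) (h3 : c₃ ≤ c₁ + c₂) (hm : 1 ≤ m)
    (hμ : m ≤ min (c₁ + c₂ - c₃) (min (c₃ - c₁) (c₃ - c₂))) :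
    (1 ∈ nSet π c₁ c₂ c₃) ∧
    (∀ a ∈ nSet π c₁ c₂ c₃, ∀ b ∈ nSet π c₁ c₂ c₃, a * b ∈ nSet π c₁ c₂ c₃) ∧
    (∀ a ∈ nSet π c₁ c₂ c₃, a⁻¹ ∈ nSet π c₁ c₂ c₃) ∧
    (1 ∈ nSet π (c₁ - m) (c₂ - m) (c₃ - m)) ∧
    (∀ a ∈ nSet π (c₁ - m) (c₂ - m) (c₃ - m), ∀ b ∈ nSet π (c₁ - m) (c₂ - m) (c₃ - m),
      a * b ∈ nSet π (c₁ - m) (c₂ - m) (c₃ - m)) ∧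
    (∀ a ∈ nSet π (c₁ - m) (c₂ - m) (c₃ - m), a⁻¹ ∈ nSet π (c₁ - m) (c₂ - m) (c₃ - m)) ∧
    nSet π c₁ c₂ c₃ ⊆ nSet π (c₁ - m) (c₂ - m) (c₃ - m) ∧
    (∀ g ∈ nSet π (c₁ - m) (c₂ - m) (c₃ - m), ∀ n ∈ nSet π c₁ c₂ c₃,
      g * n * g⁻¹ ∈ nSet π c₁ c₂ c₃) := by
  rw [le_min_iff, le_min_iff] at hμ
  obtain ⟨hμ1, hμ2, hμ3⟩ := hμ
  have hc : c₃ - m ≤ (c₁ - m) + (c₂ - m) := by omega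
  refine ⟨nSet_one π _ _ _, fun a ha b hb => nSet_mul π h3 ha hb,
    fun a ha => nSet_inv π h3 ha, nSet_one π _ _ _,
    fun a ha b hb => nSet_mul π hc ha hb, fun a ha => nSet_inv π hc ha,
    nSet_subset π (by omega) (by omega) (by omega),
    fun g hg n hn => nSet_conj π (by omega) (by omega) hg hn⟩
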